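/- Let K be a real symmetric positive definite n×n matrix, M a real symmetric positive semidefinite n×n matrix, and β ∈ ℝ. Define the Schur complement R := K + β² M K⁻¹ M. Then the geometric mean [K,R]_{1/2} := K^{1/2}(K^{−1/2} R K^{−1/2})^{1/2} K^{1/2} satisfies the two-sided Loewner bound (1/√2)(K + |β| M) ≼ [K,R]_{1/2} ≼ K + |β| M. -/

import Mathlib

open Matrix

/-- Nonnegative scalar multiple of a real PSD matrix is PSD. -/
lemma psd_smul_aux {n : ℕ} {A : Matrix (Fin n) (Fin n) ℝ} (hA : A.PosSemidef)
    {c : ℝ} (hc : 0 ≤ c) : (c • A).PosSemidef := by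
  constructor
  · unfold Matrix.IsHermitian
    rw [conjTranspose_smul, star_trivial, hA.1]
  · intro x
    exact (hA.smul hc).2 x

/-- Operator monotonicity of the square root for real matrices:
if `S, T` are PSD and `T*T - S*S` is PSD, then `T - S` is PSD. -/
lemma sqrt_mono_aux {n : ℕ} {S T : Matrix (Fin n) (Fin n) ℝ}
    (hS : S.PosSemidef) (hT : T.PosSemidef)
    (h : (T * T - S * S).PosSemidef) : (T - S).PosSemidef := by
  have hD : (T - S).IsHermitian := hT.1.sub hS.1
  refine hD.posSemidef_iff_eigenvalues_nonneg.mpr fun i => ?_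
  by_contra hneg
  push_neg at hneg
  rw [Pi.zero_apply] at hneg
  set lam : ℝ := hD.eigenvalues i with hlam
  set v : Fin n → ℝ := ⇑(hD.eigenvectorBasis i) with hv
  have hvne : v ≠ 0 := by
    intro h0
    apply hD.eigenvectorBasis.orthonormal.ne_zero i
    ext j
    exact congrFun h0 j
  have heig : (T - S) *ᵥ v = lam • v := hD.mulVec_eigenvectorBasis i
  have hsymmD : (T - S)ᵀ = T - S := by
    rw [← conjTranspose_eq_transpose_of_trivial, hD]
  -- key identity
  have hsplit : T * T - S * S = T * (T - S) + (T - S) * S := by noncomm_ring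
  have key : v ⬝ᵥ ((T * T - S * S) *ᵥ v) =
      lam * (v ⬝ᵥ (T *ᵥ v) + v ⬝ᵥ (S *ᵥ v)) := by
    rw [hsplit, add_mulVec, dotProduct_add, ← mulVec_mulVec, ← mulVec_mulVec, heig]
    have h1 : v ⬝ᵥ (T *ᵥ (lam • v)) = lam * (v ⬝ᵥ (T *ᵥ v)) := by
      rw [mulVec_smul, dotProduct_smul, smul_eq_mul]
    have h2 : v ⬝ᵥ ((T - S) *ᵥ (S *ᵥ v)) = lam * (v ⬝ᵥ (S *ᵥ v)) := by
      rw [dotProduct_mulVec, ← mulVec_transpose, hsymmD, heig, smul_dotProduct,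
        smul_eq_mul]
    rw [h1, h2, mul_add]
  have hTv : 0 ≤ v ⬝ᵥ (T *ᵥ v) := by simpa using hT.dotProduct_mulVec_nonneg v
  have hSv : 0 ≤ v ⬝ᵥ (S *ᵥ v) := by simpa using hS.dotProduct_mulVec_nonneg v
  have hpos : 0 ≤ v ⬝ᵥ ((T * T - S * S) *ᵥ v) := by simpa using h.dotProduct_mulVec_nonneg v
  rw [key] at hpos
  have hsum0 : v ⬝ᵥ (T *ᵥ v) + v ⬝ᵥ (S *ᵥ v) ≤ 0 := by nlinarith
  have hT0 : v ⬝ᵥ (T *ᵥ v) = 0 := by linarith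
  have hS0 : v ⬝ᵥ (S *ᵥ v) = 0 := by linarith
  have hTv0 : T *ᵥ v = 0 := (hT.dotProduct_mulVec_zero_iff v).mp (by simpa using hT0)
  have hSv0 : S *ᵥ v = 0 := (hS.dotProduct_mulVec_zero_iff v).mp (by simpa using hS0)
  have : lam • v = 0 := by
    rw [← heig, sub_mulVec, hTv0, hSv0, sub_zero]
  rcases smul_eq_zero.mp this with h0 | h0
  · exact absurd h0 (ne_of_lt hneg)
  · exact hvne h0

/-- For `K` real symmetric positive definite, `M` real symmetric positive semidefinite,
`β ∈ ℝ` and the Schur complement `R = K + β² M K⁻¹ M`, the geometric mean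
`[K,R]_{1/2} = K^{1/2}(K^{−1/2} R K^{−1/2})^{1/2} K^{1/2}` satisfies
`(1/√2)(K + |β| M) ≼ [K,R]_{1/2} ≼ K + |β| M` in the Loewner order.
The positive semidefinite square roots are characterized by
`SK * SK = K` and `G * G = SK⁻¹ * R * SK⁻¹`. -/
theorem stmt_9 (n : ℕ) (K M : Matrix (Fin n) (Fin n) ℝ)
    (hK : K.PosDef) (hM : M.PosSemidef) (β : ℝ)
    (R : Matrix (Fin n) (Fin n) ℝ) (hR : R = K + β ^ 2 • (M * K⁻¹ * M))
    (SK G : Matrix (Fin n) (Fin n) ℝ)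
    (hSK : SK.PosSemidef) (hSK2 : SK * SK = K)
    (hG : G.PosSemidef) (hG2 : G * G = SK⁻¹ * R * SK⁻¹) :
    ((SK * G * SK) - (1 / Real.sqrt 2) • (K + |β| • M)).PosSemidef ∧
    ((K + |β| • M) - SK * G * SK).PosSemidef := by
  -- SK is invertible
  have hdetK : K.det ≠ 0 := ne_of_gt hK.det_pos
  have hdet : IsUnit SK.det := by
    rw [← hSK2, det_mul] at hdetK
    exact isUnit_iff_ne_zero.mpr (fun h => hdetK (by rw [h, zero_mul]))
  have hleft : SK⁻¹ * SK = 1 := nonsing_inv_mul _ hdet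
  have hright : SK * SK⁻¹ = 1 := mul_nonsing_inv _ hdet
  have hKinv : K⁻¹ = SK⁻¹ * SK⁻¹ := by rw [← hSK2, Matrix.mul_inv_rev]
  have hSKinvH : SK⁻¹ᴴ = SK⁻¹ := by rw [conjTranspose_nonsing_inv, hSK.1]
  -- the conjugated mass matrix
  set D : Matrix (Fin n) (Fin n) ℝ := SK⁻¹ * M * SK⁻¹ with hD
  have hDpsd : D.PosSemidef := by
    have := hM.conjTranspose_mul_mul_same SK⁻¹
    rwa [hSKinvH] at this
  set A : Matrix (Fin n) (Fin n) ℝ := |β| • D with hA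
  have hApsd : A.PosSemidef := psd_smul_aux hDpsd (abs_nonneg β)
  -- conjugation identities
  have hconj : ∀ X : Matrix (Fin n) (Fin n) ℝ, SK * (SK⁻¹ * X * SK⁻¹) * SK = X := by
    intro X
    have e : SK * (SK⁻¹ * X * SK⁻¹) * SK = (SK * SK⁻¹) * X * (SK⁻¹ * SK) := by
      simp only [Matrix.mul_assoc]
    rw [e, hright, hleft, one_mul, mul_one]
  -- G * G = 1 + A * A
  have hDD : D * D = SK⁻¹ * (M * K⁻¹ * M) * SK⁻¹ := by
    rw [hKinv, hD]
    simp only [Matrix.mul_assoc]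
  have hAA : A * A = β ^ 2 • (SK⁻¹ * (M * K⁻¹ * M) * SK⁻¹) := by
    rw [hA, smul_mul_smul_comm, hDD, abs_mul_abs_self, ← sq]
  have hGG : G * G = 1 + A * A := by
    rw [hG2, hR, Matrix.mul_add, Matrix.add_mul, hAA]
    congr 1
    · rw [← hSK2]
      have e : SK⁻¹ * (SK * SK) * SK⁻¹ = (SK⁻¹ * SK) * (SK * SK⁻¹) := by
        simp only [Matrix.mul_assoc]
      rw [e, hleft, hright, one_mul]
    · rw [Matrix.mul_smul, Matrix.smul_mul]
  -- 1 + A is PSD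
  have hOneA : (1 + A : Matrix (Fin n) (Fin n) ℝ).PosSemidef :=
    Matrix.PosSemidef.one.add hApsd
  -- upper bound : (1 + A) - G is PSD
  have hup : ((1 + A) - G).PosSemidef := by
    apply sqrt_mono_aux hG hOneA
    have e : (1 + A) * (1 + A) - G * G = A + A := by rw [hGG]; noncomm_ring
    rw [e]
    exact hApsd.add hApsd
  -- lower bound : G - (1/√2) • (1 + A) is PSD
  have hc : (0:ℝ) ≤ 1 / Real.sqrt 2 := by positivity
  have hSpsd : ((1 / Real.sqrt 2) • (1 + A)).PosSemidef := psd_smul_aux hOneA hc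
  have hlow : (G - (1 / Real.sqrt 2) • (1 + A)).PosSemidef := by
    apply sqrt_mono_aux hSpsd hG
    have hhalf : (1 / Real.sqrt 2) * (1 / Real.sqrt 2) = 1 / 2 := by
      rw [div_mul_div_comm, one_mul, Real.mul_self_sqrt (by norm_num)]
    have e : G * G - ((1 / Real.sqrt 2) • (1 + A)) * ((1 / Real.sqrt 2) • (1 + A)) =
        (1 / 2 : ℝ) • ((1 - A) * (1 - A)) := by
      have hSS : ((1 / Real.sqrt 2) • (1 + A)) * ((1 / Real.sqrt 2) • (1 + A)) =
          (1 / 2 : ℝ) • ((1 + A) * (1 + A)) := by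
        rw [smul_mul_smul_comm, hhalf]
      have e1 : (1 + A) * (1 + A) = 1 + A + A + A * A := by noncomm_ring
      have e2 : (1 - A) * (1 - A) = 1 - A - A + A * A := by noncomm_ring
      rw [hGG, hSS, e1, e2]
      module
    rw [e]
    apply psd_smul_aux _ (by norm_num : (0:ℝ) ≤ 1/2)
    have h1A : (1 - A)ᴴ = 1 - A := (isHermitian_one.sub hApsd.1)
    have := posSemidef_conjTranspose_mul_self (1 - A)
    rwa [h1A] at this
  -- transport through conjugation by SK
  have hSKA : SK * A * SK = |β| • M := by
    rw [hA, Matrix.mul_smul, Matrix.smul_mul, hD, hconj M]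
  have hexp : SK * ((1 / Real.sqrt 2) • (1 + A)) * SK =
      (1 / Real.sqrt 2) • (K + |β| • M) := by
    rw [Matrix.mul_smul, Matrix.smul_mul]
    congr 1
    rw [Matrix.mul_add, Matrix.add_mul, Matrix.mul_one, hSK2, hSKA]
  have hexp1 : SK * (1 + A) * SK = K + |β| • M := by
    rw [Matrix.mul_add, Matrix.add_mul, Matrix.mul_one, hSK2, hSKA]
  constructor
  · have := hlow.mul_mul_conjTranspose_same SK
    rw [hSK.1, Matrix.mul_sub, Matrix.sub_mul, hexp] at this
    exact this
  · have := hup.mul_mul_conjTranspose_same SK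
    rw [hSK.1, Matrix.mul_sub, Matrix.sub_mul, hexp1] at this
    exact this
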